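/- arXiv:math/0012092 — 4 statements merged into one kernel-verified Lean document; each statement's English description precedes it below -/
import Mathlib

section
/- Let R be a UFD (in particular R₁ ⊗ R₂ with R₁ = ℂ[X₁,…,Xₙ] and R₂ = ℂ[T]_{(T)}), K₁ = ℂ(X₁,…,Xₙ), K₂ = ℂ(T). Let M be a torsion-free R-module such that K₁M is free of rank r over K₁ ⊗ R₂ and K₂M is free of rank r over R₁ ⊗ K₂. Then M is finitely generated as an R-module. -/
open TensorProduct

instance : (Ideal.span {(Polynomial.X : Polynomial ℂ)}).IsPrime :=
  (Ideal.span_singleton_prime Polynomial.X_ne_zero).mpr Polynomial.prime_X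

/-- `R₂ = ℂ[T]_{(T)}`, the localization of `ℂ[T]` at the prime ideal `(T)`. -/
def Rtwo : Type :=
  Localization (Ideal.span {(Polynomial.X : Polynomial ℂ)}).primeCompl

noncomputable instance : CommRing Rtwo := by unfold Rtwo; infer_instance
noncomputable instance : Algebra ℂ Rtwo := by unfold Rtwo; infer_instance
noncomputable instance : Algebra (Polynomial ℂ) Rtwo := by unfold Rtwo; infer_instance

/-- `R = R₁ ⊗_ℂ R₂` with `R₁ = ℂ[X₁,…,Xₙ]`. -/
def RR (n : ℕ) : Type := MvPolynomial (Fin n) ℂ ⊗[ℂ] Rtwo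

noncomputable instance (n : ℕ) : CommRing (RR n) := by unfold RR; infer_instance

/-- The element `T = 1 ⊗ T` of `R`. -/
noncomputable def tt (n : ℕ) : RR n :=
  show MvPolynomial (Fin n) ℂ ⊗[ℂ] Rtwo from
    (1 : MvPolynomial (Fin n) ℂ) ⊗ₜ[ℂ] (algebraMap (Polynomial ℂ) Rtwo Polynomial.X)

/-- The multiplicative set of nonzero elements of `R₁`, viewed inside `R = R₁ ⊗ R₂`. -/
noncomputable def Sone (n : ℕ) : Submonoid (RR n) :=
  Submonoid.map
    (show MvPolynomial (Fin n) ℂ →* RR n from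
      (Algebra.TensorProduct.includeLeft :
        MvPolynomial (Fin n) ℂ →ₐ[ℂ] MvPolynomial (Fin n) ℂ ⊗[ℂ] Rtwo).toRingHom.toMonoidHom)
    (nonZeroDivisors (MvPolynomial (Fin n) ℂ))

-- Auxiliary infrastructure
noncomputable section Aux

abbrev pT : Ideal (Polynomial ℂ) := Ideal.span {(Polynomial.X : Polynomial ℂ)}

instance : IsLocalization pT.primeCompl Rtwo := Localization.isLocalization

instance : pT.IsMaximal := PrincipalIdealRing.isMaximal_of_irreducible Polynomial.irreducible_X

instance : IsDomain Rtwo :=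
  IsLocalization.isDomain_of_le_nonZeroDivisors (S := Rtwo) pT.primeCompl_le_nonZeroDivisors

instance : IsLocalRing Rtwo := IsLocalization.AtPrime.isLocalRing Rtwo pT

/-- the image of T in Rtwo -/
def T2 : Rtwo := algebraMap (Polynomial ℂ) Rtwo Polynomial.X

lemma span_T2 : Ideal.span {T2} = IsLocalRing.maximalIdeal Rtwo := by
  rw [← IsLocalization.AtPrime.map_eq_maximalIdeal (R := Polynomial ℂ) (p := pT)]
  rw [Ideal.map_span, Set.image_singleton]; rfl

lemma prime_T2 : Prime T2 := by
  have hsp : (Ideal.span {T2}).IsPrime := by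
    rw [span_T2]; exact (IsLocalRing.maximalIdeal.isMaximal Rtwo).isPrime
  have hne : T2 ≠ 0 := by
    intro h
    have := IsLocalization.injective Rtwo (pT.primeCompl_le_nonZeroDivisors)
    have h0 : algebraMap (Polynomial ℂ) Rtwo Polynomial.X
        = algebraMap (Polynomial ℂ) Rtwo 0 := by simpa [T2, map_zero] using h
    exact Polynomial.X_ne_zero (this h0)
  exact (Ideal.span_singleton_prime hne).mp hsp

lemma not_isUnit_T2 : ¬ IsUnit T2 := prime_T2.not_unit


-- continuing inside section Aux
variable (n : ℕ)

/-- The isomorphism `RR n ≃ Rtwo[X₁,…,Xₙ]`. -/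
def rrEquiv : RR n ≃+* MvPolynomial (Fin n) Rtwo :=
  ((Algebra.TensorProduct.comm ℂ (MvPolynomial (Fin n) ℂ) Rtwo).toRingEquiv).trans
    (MvPolynomial.algebraTensorAlgEquiv ℂ Rtwo).toRingEquiv

lemma rrEquiv_tt : rrEquiv n (tt n) = MvPolynomial.C T2 := by
  show (MvPolynomial.algebraTensorAlgEquiv ℂ Rtwo)
      ((Algebra.TensorProduct.comm ℂ (MvPolynomial (Fin n) ℂ) Rtwo)
        ((1 : MvPolynomial (Fin n) ℂ) ⊗ₜ[ℂ] T2)) = MvPolynomial.C T2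
  rw [Algebra.TensorProduct.comm_tmul, MvPolynomial.algebraTensorAlgEquiv_tmul]
  rw [map_one, Algebra.smul_def, mul_one]
  rfl

lemma rrEquiv_left (p : MvPolynomial (Fin n) ℂ) :
    rrEquiv n ((show MvPolynomial (Fin n) ℂ →* RR n from
      (Algebra.TensorProduct.includeLeft :
        MvPolynomial (Fin n) ℂ →ₐ[ℂ] MvPolynomial (Fin n) ℂ ⊗[ℂ] Rtwo).toRingHom.toMonoidHom) p)
      = MvPolynomial.map (algebraMap ℂ Rtwo) p := by
  show (MvPolynomial.algebraTensorAlgEquiv ℂ Rtwo)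
      ((Algebra.TensorProduct.comm ℂ (MvPolynomial (Fin n) ℂ) Rtwo)
        (p ⊗ₜ[ℂ] 1)) = _
  rw [Algebra.TensorProduct.comm_tmul, MvPolynomial.algebraTensorAlgEquiv_tmul, one_smul]

instance : IsDomain (RR n) := (rrEquiv n).toMulEquiv.isDomain (MvPolynomial (Fin n) Rtwo)

instance : IsNoetherianRing Rtwo :=
  IsLocalization.isNoetherianRing pT.primeCompl Rtwo inferInstance

instance : IsNoetherianRing (RR n) :=
  isNoetherianRing_of_ringEquiv _ (rrEquiv n).symm

lemma prime_tt : Prime (tt n) := by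
  rw [← MulEquiv.prime_iff (rrEquiv n).toMulEquiv]
  show Prime (rrEquiv n (tt n))
  rw [rrEquiv_tt]
  exact (MvPolynomial.prime_C_iff _).mpr prime_T2

lemma not_dvd_sone {s : RR n} (hs : s ∈ Sone n) : ¬ tt n ∣ s := by
  obtain ⟨p, hp, rfl⟩ := hs
  intro ⟨c, hc⟩
  apply_fun (rrEquiv n) at hc
  rw [map_mul, rrEquiv_tt, rrEquiv_left] at hc
  have hp0 : p ≠ 0 := nonZeroDivisors.ne_zero hp
  obtain ⟨m, hm⟩ := MvPolynomial.support_nonempty.mpr hp0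
  have := congrArg (MvPolynomial.coeff m) hc
  rw [MvPolynomial.coeff_map, MvPolynomial.coeff_C_mul] at this
  have hcoeff : p.coeff m ≠ 0 := MvPolynomial.mem_support_iff.mp hm
  have hunit : IsUnit (algebraMap ℂ Rtwo (p.coeff m)) :=
    (IsUnit.mk0 _ hcoeff).map (algebraMap ℂ Rtwo)
  exact not_isUnit_T2 (isUnit_of_mul_isUnit_left (by rw [← this]; exact hunit))
end Aux

section MainAux

theorem aux_finite {R : Type*} [CommRing R] [IsDomain R] [IsNoetherianRing R]
    (t : R) (ht : Prime t) (S₁ : Submonoid R) (hS : ∀ s ∈ S₁, ¬ t ∣ s)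
    (M : Type*) [AddCommGroup M] [Module R M]
    (htf : ∀ (a : R) (x : M), a • x = 0 → a = 0 ∨ x = 0)
    (R1t : Type*) [CommRing R1t] [Algebra R R1t] [IsLocalization S₁ R1t]
    (M1t : Type*) [AddCommGroup M1t] [Module R M1t] [Module R1t M1t]
    [IsScalarTower R R1t M1t]
    (f1 : M →ₗ[R] M1t) [IsLocalizedModule S₁ f1]
    (ι : Type*) [Fintype ι] (ε : Module.Basis ι R1t M1t)
    (R2t : Type*) [CommRing R2t] [Algebra R R2t]
    [IsLocalization (Submonoid.powers t) R2t]
    (M2t : Type*) [AddCommGroup M2t] [Module R M2t] [Module R2t M2t]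
    [IsScalarTower R R2t M2t]
    (f2 : M →ₗ[R] M2t) [IsLocalizedModule (Submonoid.powers t) f2]
    (κ : Type*) [Fintype κ] (e : Module.Basis κ R2t M2t) :
    Module.Finite R M := by
  classical
  have hP_le : Submonoid.powers t ≤ nonZeroDivisors R := by
    intro x hx
    obtain ⟨k, hk⟩ := hx
    exact mem_nonZeroDivisors_of_ne_zero (hk ▸ pow_ne_zero k ht.ne_zero)
  have hinj2 : Function.Injective (algebraMap R R2t) := IsLocalization.injective R2t hP_le
  haveI : IsDomain R2t := IsLocalization.isDomain_of_le_nonZeroDivisors (S := R2t) hP_le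
  -- the double localization L = S₁⁻¹(R[1/t])
  set L := LocalizedModule S₁ R2t with hL
  set q : R2t →ₗ[R] L := LocalizedModule.mkLinearMap S₁ R2t with hq
  have hU : ∀ x : S₁, IsUnit (algebraMap R (Module.End R L) x) :=
    fun x => IsLocalizedModule.map_units (LocalizedModule.mkLinearMap S₁ R2t) x
  have hsmul_inj : ∀ (s : S₁) (z₁ z₂ : L), (s : R) • z₁ = (s : R) • z₂ → z₁ = z₂ := by
    intro s z₁ z₂ hz
    have hbij := (Module.End.isUnit_iff _).mp (hU s)
    apply hbij.injective
    simpa only [Module.algebraMap_end_apply] using hz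
  -- the canonical map τ : R1t → L
  set τ : R1t →ₗ[R] L :=
    IsLocalizedModule.lift S₁ (Algebra.linearMap R R1t)
      (q ∘ₗ Algebra.linearMap R R2t) hU with hτdef
  have hτ : ∀ a : R, τ (algebraMap R R1t a) = q (algebraMap R R2t a) := by
    intro a
    have h := IsLocalizedModule.lift_comp S₁ (Algebra.linearMap R R1t)
      (q ∘ₗ Algebra.linearMap R R2t) hU
    exact LinearMap.congr_fun h a
  set Q : Submodule R L := LinearMap.range τ with hQ
  -- Q is closed under division by elements of S₁
  have hQdiv : ∀ (s : S₁) (z : L), (s : R) • z ∈ Q → z ∈ Q := by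
    rintro s z ⟨w, hw⟩
    have hu : IsUnit (algebraMap R R1t (s : R)) := IsLocalization.map_units R1t s
    refine ⟨(↑hu.unit⁻¹ : R1t) * w, hsmul_inj s _ _ ?_⟩
    have hmul : (s : R) • ((↑hu.unit⁻¹ : R1t) * w) = w := by
      rw [Algebra.smul_def, ← mul_assoc, IsUnit.mul_val_inv, one_mul]
    rw [← map_smul, hmul, hw]
  have hτmk : ∀ (a : R) (s : S₁),
      (s : R) • τ (IsLocalization.mk' R1t a s) = q (algebraMap R R2t a) := by
    intro a s
    rw [← map_smul, Algebra.smul_def, IsLocalization.mk'_spec', hτ]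
  -- key fact 1 : an element of R2t whose image lies in Q comes from R
  have hQtoR : ∀ x : R2t, q x ∈ Q → ∃ c : R, algebraMap R R2t c = x := by
    rintro x ⟨w, hw⟩
    obtain ⟨⟨a, s⟩, rfl⟩ := IsLocalization.mk'_surjective S₁ w
    have h1 : (s : R) • q x = q (algebraMap R R2t a) := by rw [← hw, hτmk]
    have h2 : q (algebraMap R R2t (s : R) * x - algebraMap R R2t a) = 0 := by
      rw [map_sub, sub_eq_zero, ← Algebra.smul_def, map_smul, h1]
    obtain ⟨u, hu0⟩ :=
      (IsLocalizedModule.eq_zero_iff S₁ (LocalizedModule.mkLinearMap S₁ R2t)).mp h2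
    have hune : algebraMap R R2t (u : R) ≠ 0 := by
      intro h0
      have hu0' : (u : R) = 0 := hinj2 (by rw [h0, map_zero])
      exact hS u u.2 (by rw [hu0']; exact dvd_zero t)
    have h3 : algebraMap R R2t (s : R) * x = algebraMap R R2t a := by
      have h := hu0
      rw [Submonoid.smul_def, Algebra.smul_def] at h
      rcases mul_eq_zero.mp h with h' | h'
      · exact absurd h' hune
      · exact sub_eq_zero.mp h'
    obtain ⟨⟨b, p⟩, hb⟩ := IsLocalization.surj (M := Submonoid.powers t) (S := R2t) x
    obtain ⟨k, hk⟩ := (Submonoid.mem_powers_iff (p : R) t).mp p.2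
    have heq : (s : R) * b = a * t ^ k :=
      hinj2 (by
        calc algebraMap R R2t ((s : R) * b)
            = algebraMap R R2t (s : R) * algebraMap R R2t b := by rw [map_mul]
          _ = algebraMap R R2t (s : R) * (x * algebraMap R R2t (p : R)) := by rw [← hb]
          _ = (algebraMap R R2t (s : R) * x) * algebraMap R R2t (p : R) := by ring
          _ = algebraMap R R2t a * algebraMap R R2t (p : R) := by rw [h3]
          _ = algebraMap R R2t (a * t ^ k) := by rw [← map_mul, hk])
    have hdvd : t ^ k ∣ b :=
      ht.pow_dvd_of_dvd_mul_left k (hS s s.2) ⟨a, by rw [heq]; ring⟩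
    obtain ⟨c, hc⟩ := hdvd
    refine ⟨c, ?_⟩
    have hup : IsUnit (algebraMap R R2t (t ^ k)) :=
      IsLocalization.map_units (M := Submonoid.powers t) R2t ⟨t ^ k, k, rfl⟩
    apply hup.mul_left_cancel
    calc algebraMap R R2t (t ^ k) * algebraMap R R2t c
        = algebraMap R R2t b := by rw [← map_mul, ← hc]
      _ = x * algebraMap R R2t (p : R) := hb.symm
      _ = algebraMap R R2t (t ^ k) * x := by rw [← hk]; ring
  -- key fact 2 : every element of L has a power of t moving it into Q
  have hQpow : ∀ y : L, ∃ k : ℕ, t ^ k • y ∈ Q := by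
    intro y
    refine LocalizedModule.induction_on ?_ y
    intro b s
    obtain ⟨⟨a, p⟩, hb⟩ := IsLocalization.surj (M := Submonoid.powers t) (S := R2t) b
    obtain ⟨k, hk⟩ := (Submonoid.mem_powers_iff (p : R) t).mp p.2
    refine ⟨k, ⟨IsLocalization.mk' R1t a s, ?_⟩⟩
    apply hsmul_inj s
    rw [hτmk]
    have hb' : t ^ k • b = algebraMap R R2t a := by
      rw [Algebra.smul_def, hk, mul_comm, hb]
    rw [LocalizedModule.smul'_mk, hb']
    rw [show ((s : R) • LocalizedModule.mk (algebraMap R R2t a) s : L)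
        = LocalizedModule.mk ((s : S₁) • algebraMap R R2t a) s from
      (LocalizedModule.smul'_mk _ _ _)]
    rw [LocalizedModule.mk_cancel]
    rfl
  -- the coordinate functionals
  set φ : κ → (M →ₗ[R] R2t) := fun i => ((e.coord i).restrictScalars R) ∘ₗ f2 with hφ
  set ψ : κ → (M1t →ₗ[R] L) := fun i => IsLocalizedModule.lift S₁ f1 (q ∘ₗ φ i) hU with hψdef
  have hψ : ∀ i m, ψ i (f1 m) = q (φ i m) := by
    intro i m
    exact LinearMap.congr_fun (IsLocalizedModule.lift_comp S₁ f1 (q ∘ₗ φ i) hU) m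
  -- the uniform bound K
  choose k hk using fun pr : κ × ι => hQpow ((ψ pr.1) (ε pr.2))
  set K := Finset.univ.sup k with hKdef
  have hK : ∀ i j, t ^ K • ψ i (ε j) ∈ Q := by
    intro i j
    have hle : k (i, j) ≤ K := Finset.le_sup (Finset.mem_univ _)
    rw [show K = (K - k (i, j)) + k (i, j) from (Nat.sub_add_cancel hle).symm, pow_add,
      mul_smul]
    exact Q.smul_mem _ (hk (i, j))
  -- the bound propagates to all of M1t
  have hW : ∀ (i : κ) (x : M1t), t ^ K • ψ i x ∈ Q := by
    intro i x
    have hx : x ∈ Submodule.span R1t (Set.range ε) := by rw [ε.span_eq]; trivial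
    induction hx using Submodule.span_induction with
    | mem z hz => obtain ⟨j, rfl⟩ := hz; exact hK i j
    | zero => rw [map_zero, smul_zero]; exact Q.zero_mem
    | add x y _ _ hx hy => rw [map_add, smul_add]; exact Q.add_mem hx hy
    | smul c x _ hx =>
      obtain ⟨⟨a, s⟩, rfl⟩ := IsLocalization.mk'_surjective S₁ c
      apply hQdiv s
      have h1 : (s : R) • (IsLocalization.mk' R1t a s • x) = a • x := by
        rw [← algebraMap_smul R1t (s : R), smul_smul, IsLocalization.mk'_spec',
          algebraMap_smul]
      have hcalc : (s : R) • t ^ K • ψ i (IsLocalization.mk' R1t a s • x)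
          = a • (t ^ K • ψ i x) := by
        calc (s : R) • t ^ K • ψ i (IsLocalization.mk' R1t a s • x)
            = t ^ K • ((s : R) • ψ i (IsLocalization.mk' R1t a s • x)) := smul_comm _ _ _
          _ = t ^ K • ψ i ((s : R) • (IsLocalization.mk' R1t a s • x)) := by
              rw [(ψ i).map_smul ((s : R)) _]
          _ = t ^ K • ψ i (a • x) := by rw [h1]
          _ = t ^ K • (a • ψ i x) := by rw [(ψ i).map_smul a x]
          _ = a • (t ^ K • ψ i x) := smul_comm _ _ _
      rw [hcalc]
      exact Q.smul_mem _ hx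
  -- the key estimate
  have key : ∀ (m : M) (i : κ), ∃ c : R,
      algebraMap R R2t c = algebraMap R R2t (t ^ K) * (e.repr (f2 m) i) := by
    intro m i
    have h1 : t ^ K • ψ i (f1 m) ∈ Q := hW i (f1 m)
    rw [hψ, ← map_smul] at h1
    obtain ⟨c, hc⟩ := hQtoR _ h1
    refine ⟨c, ?_⟩
    rw [hc, Algebra.smul_def]
    congr 1
  -- conclusion
  have hut : IsUnit (algebraMap R R2t (t ^ K)) :=
    IsLocalization.map_units (M := Submonoid.powers t) R2t ⟨t ^ K, K, rfl⟩
  set g : κ → M2t := fun i => (↑hut.unit⁻¹ : R2t) • e i with hg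
  set N : Submodule R M2t := Submodule.span R (Set.range g) with hN
  have hmem : ∀ m, f2 m ∈ N := by
    intro m
    rw [← e.sum_repr (f2 m)]
    apply Submodule.sum_mem
    intro i _
    obtain ⟨c, hc⟩ := key m i
    have hrepr : (e.repr (f2 m)) i = (↑hut.unit⁻¹ : R2t) * algebraMap R R2t c := by
      rw [hc, ← mul_assoc, IsUnit.val_inv_mul, one_mul]
    rw [hrepr, mul_comm, mul_smul, algebraMap_smul]
    exact N.smul_mem c (Submodule.subset_span ⟨i, rfl⟩)
  have hfgN : N.FG := Submodule.fg_span (Set.finite_range g)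
  have hNoeN : IsNoetherian R N := isNoetherian_of_fg_of_noetherian N hfgN
  have h0 : ∀ m : M, f2 m = 0 → m = 0 := by
    intro m hm
    obtain ⟨s, hs⟩ := (IsLocalizedModule.eq_zero_iff (Submonoid.powers t) f2).mp hm
    rcases htf (s : R) m (by rwa [Submonoid.smul_def] at hs) with h | h
    · exfalso
      obtain ⟨kk, hkk⟩ := (Submonoid.mem_powers_iff (s : R) t).mp s.2
      exact pow_ne_zero kk ht.ne_zero (by rw [hkk, h])
    · exact h
  have hinjf2 : Function.Injective f2 := by
    intro x y hxy
    have := h0 (x - y) (by rw [map_sub, hxy, sub_self])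
    exact sub_eq_zero.mp this
  exact Module.Finite.of_injective (f2.codRestrict N hmem)
    (fun x y hxy => hinjf2 (congrArg Subtype.val hxy))

end MainAux


/-- Lemma A3: a torsion-free `R`-module `M` such that `K₁M` is free of rank `r` over
`K₁ ⊗ R₂` and `K₂M` is free of rank `r` over `R₁ ⊗ K₂` is finitely generated over `R`. -/
theorem stmt_3 (n : ℕ) (r : ℕ)
    (M : Type*) [AddCommGroup M] [Module (RR n) M]
    (htf : ∀ (a : RR n) (x : M), a • x = 0 → a = 0 ∨ x = 0)  -- `M` is torsion-free
    -- `R1t` is the localization `K₁ ⊗ R₂` of `R` at `S₁`, `M1t` is `K₁M`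
    (R1t : Type*) [CommRing R1t] [Algebra (RR n) R1t] [IsLocalization (Sone n) R1t]
    (M1t : Type*) [AddCommGroup M1t] [Module (RR n) M1t] [Module R1t M1t]
    [IsScalarTower (RR n) R1t M1t]
    (f1 : M →ₗ[RR n] M1t) [IsLocalizedModule (Sone n) f1]
    (hf1 : Module.Free R1t M1t) (hf1r : Module.rank R1t M1t = r)
    -- `R2t` is the localization `R₁ ⊗ K₂ = R[T⁻¹]` of `R`, `M2t` is `K₂M = M[T⁻¹]`
    (R2t : Type*) [CommRing R2t] [Algebra (RR n) R2t]
    [IsLocalization (Submonoid.powers (tt n)) R2t]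
    (M2t : Type*) [AddCommGroup M2t] [Module (RR n) M2t] [Module R2t M2t]
    [IsScalarTower (RR n) R2t M2t]
    (f2 : M →ₗ[RR n] M2t) [IsLocalizedModule (Submonoid.powers (tt n)) f2]
    (hf2 : Module.Free R2t M2t) (hf2r : Module.rank R2t M2t = r) :
    Module.Finite (RR n) M := by
  haveI := hf1
  haveI := hf2
  haveI : Module.Finite R1t M1t := Module.finite_of_rank_eq_nat hf1r
  haveI : Module.Finite R2t M2t := Module.finite_of_rank_eq_nat hf2r
  exact aux_finite (tt n) (prime_tt n) (Sone n) (fun s hs => not_dvd_sone n hs) M htf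
    R1t M1t f1 _ (Module.Free.chooseBasis R1t M1t)
    R2t M2t f2 _ (Module.Free.chooseBasis R2t M2t)
end

section
/- For s ≥ 1, the determinant of the s×s matrix (a_{i,j})_{1≤i,j≤s}, where a_{i,j} = Σ_{m=1}^{i} (-1)^{m-1} m^j · C(n+1, i-m) (i.e., a_{i,j} = 1^j C(n+1,i-1) − 2^j C(n+1,i-2) + ⋯ + (−1)^{i−1} i^j C(n+1,0)), equals (−1)^{s(s−1)/2} ∏_{m=1}^{s} m!. -/
open Finset Matrix

/-- For `1 ≤ s ≤ n`, the determinant of the `s × s` matrix with entries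
`a_{i,j} = Σ_{m=1}^{i} (-1)^{m-1} m^j C(n+1, i-m)` (for `1 ≤ i, j ≤ s`)
equals `(-1)^{s(s-1)/2} ∏_{m=1}^{s} m!`. -/
theorem stmt_6 (n s : ℕ) (hs : 1 ≤ s) (hns : s ≤ n)
    (A : Matrix (Fin s) (Fin s) ℚ)
    (hA : ∀ i j : Fin s, A i j =
      ∑ m ∈ Finset.Icc 1 (i.1 + 1),
        (-1 : ℚ) ^ (m - 1) * (m : ℚ) ^ (j.1 + 1) * ((n + 1).choose (i.1 + 1 - m) : ℚ)) :
    A.det = (-1 : ℚ) ^ (s * (s - 1) / 2) * ∏ m ∈ Finset.Icc 1 s, (m.factorial : ℚ) := by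
  obtain ⟨t, rfl⟩ : ∃ t, s = t + 1 := ⟨s - 1, (Nat.succ_pred_eq_of_pos hs).symm⟩
  set B : Matrix (Fin (t + 1)) (Fin (t + 1)) ℚ := fun i m =>
    if m.1 ≤ i.1 then (-1 : ℚ) ^ m.1 * ((n + 1).choose (i.1 - m.1) : ℚ) else 0 with hBdef
  set V : Matrix (Fin (t + 1)) (Fin (t + 1)) ℚ := fun m j =>
    ((m.1 : ℚ) + 1) ^ (j.1 + 1) with hVdef
  have hAV : A = B * V := by
    ext i j
    rw [hA, Matrix.mul_apply]
    have h1 : ∀ m : Fin (t + 1), B i m * V m j =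
        (fun k : ℕ => (if k ≤ i.1 then (-1 : ℚ) ^ k * ((n + 1).choose (i.1 - k) : ℚ) else 0)
          * ((k : ℚ) + 1) ^ (j.1 + 1)) m.1 := fun m => rfl
    rw [Finset.sum_congr rfl (fun m _ => h1 m),
      Fin.sum_univ_eq_sum_range
        (fun k : ℕ => (if k ≤ i.1 then (-1 : ℚ) ^ k * ((n + 1).choose (i.1 - k) : ℚ) else 0)
          * ((k : ℚ) + 1) ^ (j.1 + 1)) (t + 1)]
    rw [show (Finset.range (t + 1)) = Finset.range (i.1 + 1) ∪ Finset.range (t + 1) from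
      (Finset.union_eq_right.2 (Finset.range_subset_range.2 i.2)).symm]
    rw [Finset.sum_union_eq_left (fun k hk hk' => by
      rw [if_neg (by simpa using fun h => hk' (Finset.mem_range.2 (Nat.lt_succ_of_le h)))]
      ring)]
    rw [← Finset.Ico_add_one_right_eq_Icc, Finset.sum_Ico_eq_sum_range]
    apply Finset.sum_congr (by norm_num)
    intro k hk
    have hk' : k ≤ i.1 := by
      simp only [Finset.mem_range] at hk; omega
    rw [if_pos hk']
    have e1 : 1 + k - 1 = k := by omega
    have e2 : i.1 + 1 - (1 + k) = i.1 - k := by omega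
    rw [e1, e2]
    push_cast
    ring
  have hdetB : B.det = (-1 : ℚ) ^ ((t + 1) * (t + 1 - 1) / 2) := by
    rw [Matrix.det_of_lowerTriangular B (fun i m h => by
      simp only [hBdef]
      rw [if_neg (by exact Nat.not_le.2 h)])]
    have hd : ∀ i : Fin (t + 1), B i i = (-1 : ℚ) ^ i.1 := by
      intro i; simp [hBdef]
    rw [Finset.prod_congr rfl (fun i _ => hd i), Finset.prod_pow_eq_pow_sum,
      Fin.sum_univ_eq_sum_range (fun k => k), Finset.sum_range_id]
  have hdetV : V.det = ∏ m ∈ Finset.Icc 1 (t + 1), (m.factorial : ℚ) := by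
    have hfac : V = Matrix.diagonal (fun m : Fin (t + 1) => ((m.1 : ℚ) + 1)) *
        Matrix.vandermonde (fun m : Fin (t + 1) => ((m.1 : ℚ) + 1)) := by
      ext m j
      simp [Matrix.mul_apply, Matrix.diagonal, Matrix.vandermonde, hVdef, pow_succ, mul_comm]
    have hvan : (Matrix.vandermonde (fun m : Fin (t + 1) => ((m.1 : ℚ) + 1))).det =
        (Matrix.vandermonde (fun m : Fin (t + 1) => (m.1 : ℚ))).det := by
      rw [Matrix.det_vandermonde, Matrix.det_vandermonde]
      apply Finset.prod_congr rfl; intro i _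
      apply Finset.prod_congr rfl; intro j _
      ring
    rw [hfac, Matrix.det_mul, Matrix.det_diagonal, hvan]
    have h2 : (Matrix.vandermonde (fun m : Fin (t + 1) => ((m : Fin (t + 1)) : ℚ))).det
        = (Nat.superFactorial t : ℚ) := Matrix.det_vandermonde_id_eq_superFactorial t
    rw [h2]
    have h3 : (∏ m : Fin (t + 1), ((m.1 : ℚ) + 1)) = ((t + 1).factorial : ℚ) := by
      rw [Fin.prod_univ_eq_prod_range (fun k => ((k : ℚ) + 1)),
        ← Finset.prod_range_add_one_eq_factorial (t + 1)]
      push_cast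
      rfl
    have h4 : (∏ m ∈ Finset.Icc 1 t, (m.factorial : ℚ)) = (Nat.superFactorial t : ℚ) := by
      rw [← Nat.prod_Icc_factorial]
      push_cast
      rfl
    rw [h3, Finset.prod_Icc_succ_top (by omega : 1 ≤ t + 1), h4]
    ring
  rw [hAV, Matrix.det_mul, hdetB, hdetV]
end

section
/- Let Z be a graded commutative ℂ-algebra with augmentation ideal Z⁺, and z'₁,…,z'ₙ elements of Z[[q−1]] whose images in (Z⁺/(Z⁺)²)[[q−1]] are Σⱼ a_{ij} C_{mⱼ} (q−1)^{mⱼ} for homogeneous elements C_{m₁},…,C_{mₙ} forming a basis of Z⁺/(Z⁺)², with (a_{ij}) ∈ ℂ^{n×n}. If the z'ᵢ generate Z ⊗ ℂ(q) as a ℂ(q)-algebra and some polynomial combination of the z'ᵢ and (q−1)⁻¹ specializes at q = 1 onto each C_{mⱼ}, then the matrix (a_{ij}) is invertible. -/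
set_option maxHeartbeats 1600000
set_option synthInstance.maxHeartbeats 400000

noncomputable section Aux13

open HahnSeries TrivSqZeroExt


lemma hahn_ext' {Γ R : Type*} [PartialOrder Γ] [Zero R] {x y : HahnSeries Γ R}
    (h : ∀ g, x.coeff g = y.coeff g) : x = y := HahnSeries.ext (funext h)

abbrev Ef (n : ℕ) : Type := TrivSqZeroExt ℂ (Fin n → ℂ)
abbrev Bf (n : ℕ) : Type := HahnSeries ℤ (Ef n)

def iotaB (n : ℕ) (x : LaurentSeries ℂ) : Bf n :=
  x.map (TrivSqZeroExt.inlHom ℂ (Fin n → ℂ)).toNonUnitalRingHom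

@[simp] lemma iotaB_coeff (n : ℕ) (x : LaurentSeries ℂ) (g : ℤ) :
    (iotaB n x).coeff g = inl (x.coeff g) := rfl

lemma iotaB_mul (n : ℕ) (x y : LaurentSeries ℂ) :
    iotaB n (x * y) = iotaB n x * iotaB n y := HahnSeries.map_mul _

lemma iotaB_add (n : ℕ) (x y : LaurentSeries ℂ) :
    iotaB n (x + y) = iotaB n x + iotaB n y := by
  refine hahn_ext' fun g => ?_; simp [HahnSeries.coeff_add]

lemma iotaB_zero (n : ℕ) : iotaB n 0 = 0 := by refine hahn_ext' fun g => ?_; simp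

lemma iotaB_single (n : ℕ) (g : ℤ) (r : ℂ) :
    iotaB n (single g r) = single g (inl r : Ef n) := by
  refine hahn_ext' fun b => ?_
  simp [HahnSeries.coeff_single, apply_ite (TrivSqZeroExt.inl : ℂ → Ef n)]

lemma iotaB_one (n : ℕ) : iotaB n 1 = 1 := by
  have h1 : (1 : LaurentSeries ℂ) = single 0 1 := by rw [← HahnSeries.C_apply, HahnSeries.C_one]
  have h2 : (1 : Bf n) = single 0 1 := by rw [← HahnSeries.C_apply, HahnSeries.C_one]
  rw [h1, h2, iotaB_single, inl_one]

def sigmaH {n : ℕ} (j : Fin n) : Bf n →+ LaurentSeries ℂ where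
  toFun y := y.map ((LinearMap.proj j).comp (TrivSqZeroExt.sndHom ℂ (Fin n → ℂ))).toAddMonoidHom
  map_zero' := by ext g; simp
  map_add' x y := by ext g; simp [HahnSeries.coeff_add]

@[simp] lemma sigmaH_coeff {n : ℕ} (j : Fin n) (y : Bf n) (g : ℤ) :
    (sigmaH j y).coeff g = (y.coeff g).snd j := rfl

lemma sigmaH_iota {n : ℕ} (j : Fin n) (x : LaurentSeries ℂ) : sigmaH j (iotaB n x) = 0 := by
  ext g; simp

lemma sigmaH_single {n : ℕ} (j : Fin n) (g : ℤ) (e : Ef n) :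
    sigmaH j (single g e) = single g (e.snd j) := by
  ext b
  simp [HahnSeries.coeff_single, apply_ite (fun u : Ef n => u.snd j)]

lemma sigmaH_iota_mul {n : ℕ} (j : Fin n) (x : LaurentSeries ℂ) (y : Bf n) :
    sigmaH j (iotaB n x * y) = x * sigmaH j y := by
  ext g
  have hx : (iotaB n x).support ⊆ x.support := by
    intro b hb
    simp only [HahnSeries.mem_support, iotaB_coeff] at hb ⊢
    intro h; exact hb (by rw [h, inl_zero])
  have hy : (sigmaH j y).support ⊆ y.support := by
    intro b hb
    simp only [HahnSeries.mem_support, sigmaH_coeff] at hb ⊢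
    intro h; exact hb (by rw [h]; simp)
  rw [sigmaH_coeff, HahnSeries.coeff_mul_left' x.isPWO_support hx,
    HahnSeries.coeff_mul_right' y.isPWO_support hy]
  rw [TrivSqZeroExt.snd_sum, Finset.sum_apply]
  refine Finset.sum_congr rfl fun ij _ => ?_
  simp [TrivSqZeroExt.snd_mul]

lemma algMap_hahn_coeff {R : Type*} [CommRing R] [Algebra ℂ R] (c : ℂ) (g : ℤ) :
    (algebraMap ℂ (HahnSeries ℤ R) c).coeff g = if g = 0 then algebraMap ℂ R c else 0 := by
  rw [HahnSeries.algebraMap_apply', PowerSeries.algebraMap_apply, HahnSeries.ofPowerSeries_C,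
    HahnSeries.C_apply, HahnSeries.coeff_single]
  by_cases hg0 : g = 0 <;> simp [hg0]

lemma algMap_laurent (c : ℂ) :
    algebraMap ℂ (LaurentSeries ℂ) c = HahnSeries.single (0 : ℤ) c := by
  refine hahn_ext' fun g => ?_
  rw [algMap_hahn_coeff, HahnSeries.coeff_single]
  by_cases hg0 : g = 0 <;> simp [hg0]

lemma mulE_zero {n : ℕ} {x y : Ef n} (hx : x.fst = 0) (hy : y.fst = 0) : x * y = 0 := by
  ext <;> simp [TrivSqZeroExt.fst_mul, TrivSqZeroExt.snd_mul, hx, hy]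

lemma Bmul_zero {n : ℕ} {x y : Bf n} (hx : ∀ g, (x.coeff g).fst = 0)
    (hy : ∀ g, (y.coeff g).fst = 0) : x * y = 0 := by
  refine hahn_ext' fun g => ?_
  rw [HahnSeries.coeff_mul, HahnSeries.coeff_zero]
  exact Finset.sum_eq_zero fun ij _ => mulE_zero (hx _) (hy _)

def PAsub {n : ℕ} (W : Fin n → Bf n) (hWW : ∀ i i', W i * W i' = 0) : Subalgebra ℂ (Bf n) where
  carrier := {b | ∃ x : LaurentSeries ℂ, ∃ v : Fin n → LaurentSeries ℂ,
    b = iotaB n x + ∑ i, iotaB n (v i) * W i}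
  zero_mem' := ⟨0, 0, by simp [iotaB_zero]⟩
  one_mem' := ⟨1, 0, by simp [iotaB_zero, iotaB_one]⟩
  add_mem' := by
    rintro p q ⟨x, v, rfl⟩ ⟨x', v', rfl⟩
    refine ⟨x + x', fun i => v i + v' i, ?_⟩
    simp only [iotaB_add, add_mul, Finset.sum_add_distrib]
    ring
  mul_mem' := by
    rintro p q ⟨x, v, rfl⟩ ⟨x', v', rfl⟩
    refine ⟨x * x', fun i => x * v' i + x' * v i, ?_⟩
    have hcross : (∑ i, iotaB n (v i) * W i) * (∑ i, iotaB n (v' i) * W i) = 0 := by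
      rw [Finset.sum_mul_sum]
      refine Finset.sum_eq_zero fun i _ => Finset.sum_eq_zero fun i' _ => ?_
      calc (iotaB n (v i) * W i) * (iotaB n (v' i') * W i')
          = (iotaB n (v i) * iotaB n (v' i')) * (W i * W i') := by ring
        _ = 0 := by rw [hWW, mul_zero]
    have expand : (iotaB n x + ∑ i, iotaB n (v i) * W i) *
        (iotaB n x' + ∑ i, iotaB n (v' i) * W i) =
        iotaB n x * iotaB n x' +
          (iotaB n x * ∑ i, iotaB n (v' i) * W i +
            (∑ i, iotaB n (v i) * W i) * iotaB n x') +
          (∑ i, iotaB n (v i) * W i) * (∑ i, iotaB n (v' i) * W i) := by ring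
    rw [expand, hcross, add_zero, ← iotaB_mul]
    congr 1
    rw [Finset.mul_sum, Finset.sum_mul, ← Finset.sum_add_distrib]
    refine Finset.sum_congr rfl fun i _ => ?_
    rw [iotaB_add, iotaB_mul, iotaB_mul]
    ring
  algebraMap_mem' := by
    intro c
    refine ⟨HahnSeries.single 0 c, 0, ?_⟩
    have : iotaB n (HahnSeries.single 0 c) = algebraMap ℂ (Bf n) c := by
      refine hahn_ext' fun g => ?_
      rw [iotaB_coeff, HahnSeries.coeff_single, algMap_hahn_coeff,
        apply_ite (TrivSqZeroExt.inl : ℂ → Ef n), TrivSqZeroExt.inl_zero,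
        TrivSqZeroExt.algebraMap_eq_inl]
      by_cases hg0 : g = 0 <;> simp [hg0]
    simp [iotaB_zero, this]

end Aux13

/-- Let `Z = ℂ[C₁,…,Cₙ]` be a graded polynomial algebra with generators `Cⱼ = Xⱼ` of
degrees `0 < m₁ ≤ … ≤ mₙ`, `Z⁺` its augmentation ideal, and `z'₁,…,z'ₙ ∈ Z[[q-1]]`
whose images in `(Z⁺/(Z⁺)²)[[q-1]]` are `Σⱼ a_{ij} Cⱼ (q-1)^{mⱼ}`.  If the `z'ᵢ`
generate `Z ⊗ ℂ(q)` as a `ℂ(q)`-algebra (each `Cⱼ` lies in the algebra generated by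
the `z'ᵢ` and `(q-1)^{-1}`, inside Laurent series in `q - 1`) and some polynomial
combination of the `z'ᵢ` and `(q-1)^{-1}` lies in `Z[[q-1]]` and specializes at
`q = 1` (constant term) onto each `Cⱼ`, then the matrix `(a_{ij})` is invertible. -/
theorem stmt_13 (n : ℕ) (m : Fin n → ℕ) (hm : ∀ j, 0 < m j) (hmono : Monotone m)
    (Zp2 : Ideal (MvPolynomial (Fin n) ℂ))
    (hZp2 : Zp2 = (Ideal.span (Set.range (MvPolynomial.X : Fin n → MvPolynomial (Fin n) ℂ))) ^ 2)
    (z' : Fin n → PowerSeries (MvPolynomial (Fin n) ℂ))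
    (a : Fin n → Fin n → ℂ)
    (h1 : ∀ i : Fin n, ∀ k : ℕ,
      (PowerSeries.coeff k) (z' i) -
        ∑ j ∈ Finset.univ.filter (fun j => m j = k), a i j • MvPolynomial.X j ∈ Zp2)
    (hgen : ∀ j : Fin n,
      ((HahnSeries.ofPowerSeries ℤ (MvPolynomial (Fin n) ℂ))
          (PowerSeries.C (MvPolynomial.X j)) :
        LaurentSeries (MvPolynomial (Fin n) ℂ)) ∈
      Algebra.adjoin ℂ
        ({HahnSeries.single (-1 : ℤ) (1 : MvPolynomial (Fin n) ℂ)} ∪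
          Set.range fun i => (HahnSeries.ofPowerSeries ℤ (MvPolynomial (Fin n) ℂ)) (z' i)))
    (hspec : ∀ j : Fin n, ∃ P ∈ Algebra.adjoin ℂ (Set.range z'), ∃ k : ℕ,
      ∃ w : PowerSeries (MvPolynomial (Fin n) ℂ),
        P = PowerSeries.X ^ k * w ∧
          PowerSeries.constantCoeff w = MvPolynomial.X j) :
    IsUnit (Matrix.det (Matrix.of a)) := by
  classical
  -- the square-zero extension evaluation
  set φ : (MvPolynomial (Fin n) ℂ) →ₐ[ℂ] Ef n :=
    MvPolynomial.aeval (fun j => (TrivSqZeroExt.inr (Pi.single j 1) : Ef n)) with hφ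
  set Ψ : LaurentSeries (MvPolynomial (Fin n) ℂ) → Bf n :=
    fun t => t.map φ.toRingHom.toNonUnitalRingHom with hΨ
  have hΨcoeff : ∀ (t : LaurentSeries (MvPolynomial (Fin n) ℂ)) (g : ℤ), (Ψ t).coeff g = φ (t.coeff g) := fun _ _ => rfl
  -- φ kills Zp2
  have hφ2 : ∀ p ∈ Zp2, φ p = 0 := by
    intro p hp
    rw [hZp2, sq, Ideal.span_mul_span'] at hp
    induction hp using Submodule.span_induction with
    | mem u hu =>
      obtain ⟨s, hs, t, ht, rfl⟩ := hu
      obtain ⟨i, rfl⟩ := hs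
      obtain ⟨i', rfl⟩ := ht
      rw [map_mul]
      have hXi : ∀ i'' : Fin n, φ (MvPolynomial.X i'') =
          TrivSqZeroExt.inr (R := ℂ) (M := Fin n → ℂ) (Pi.single i'' 1) := fun i'' => by
        rw [hφ, MvPolynomial.aeval_X]
      rw [hXi, hXi]
      exact TrivSqZeroExt.inr_mul_inr ℂ (M := Fin n → ℂ) _ _
    | zero => exact map_zero φ
    | add u w _ _ hu hw => rw [map_add, hu, hw, add_zero]
    | smul r u _ hu => rw [smul_eq_mul, map_mul, hu, mul_zero]
  -- W
  set W : Fin n → Bf n := fun i => Ψ ((HahnSeries.ofPowerSeries ℤ (MvPolynomial (Fin n) ℂ)) (z' i)) with hW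
  have hneg : ∀ (x : PowerSeries (MvPolynomial (Fin n) ℂ)) (g : ℤ), g < 0 →
      ((HahnSeries.ofPowerSeries ℤ (MvPolynomial (Fin n) ℂ)) x).coeff g = 0 := by
    intro x g hg
    rw [HahnSeries.ofPowerSeries_apply, HahnSeries.embDomain_notin_range]
    rintro ⟨k, hk⟩
    rw [← hk] at hg
    simp only [Nat.castOrderEmbedding_apply] at hg
    omega
  have hφc : ∀ (i : Fin n) (k : ℕ), φ ((PowerSeries.coeff k) (z' i)) =
      TrivSqZeroExt.inr (R := ℂ) (M := Fin n → ℂ)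
        (∑ j ∈ Finset.univ.filter (fun j => m j = k),
          a i j • (Pi.single j (1 : ℂ) : Fin n → ℂ)) := by
    intro i k
    have h := h1 i k
    have e : (PowerSeries.coeff k) (z' i) =
        (∑ j ∈ Finset.univ.filter (fun j => m j = k), a i j • MvPolynomial.X j) +
        ((PowerSeries.coeff k) (z' i) -
          ∑ j ∈ Finset.univ.filter (fun j => m j = k), a i j • MvPolynomial.X j) := by ring
    rw [e, map_add, hφ2 _ h, add_zero, map_sum]
    have hterm : ∀ j ∈ Finset.univ.filter (fun j => m j = k),
        φ (a i j • MvPolynomial.X j) =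
          (TrivSqZeroExt.inr (R := ℂ) (M := Fin n → ℂ)
            (a i j • (Pi.single j (1 : ℂ) : Fin n → ℂ))) := by
      intro j _
      rw [MvPolynomial.smul_eq_C_mul, map_mul, hφ, MvPolynomial.aeval_C, MvPolynomial.aeval_X,
        TrivSqZeroExt.algebraMap_eq_inl', TrivSqZeroExt.inl_mul_inr]
      simp
    rw [Finset.sum_congr rfl hterm]
    refine TrivSqZeroExt.ext ?_ ?_
    · simp [TrivSqZeroExt.fst_sum, TrivSqZeroExt.fst_inr]
    · simp [TrivSqZeroExt.snd_sum, TrivSqZeroExt.snd_inr]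
  have hWc : ∀ (i : Fin n) (g : ℤ),
      (W i).coeff g = φ (((HahnSeries.ofPowerSeries ℤ (MvPolynomial (Fin n) ℂ)) (z' i)).coeff g) := fun _ _ => rfl
  have hWfst : ∀ (i : Fin n) (g : ℤ), ((W i).coeff g).fst = 0 := by
    intro i g
    rw [hWc]
    rcases g with k | k
    · simp only [Int.ofNat_eq_natCast]
      rw [HahnSeries.ofPowerSeries_apply_coeff, hφc, TrivSqZeroExt.fst_inr]
    · rw [hneg _ _ (Int.negSucc_lt_zero k), map_zero, TrivSqZeroExt.fst_zero]
  have hWW : ∀ i i', W i * W i' = 0 := fun i i' => Bmul_zero (hWfst i) (hWfst i')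
  have hWsig : ∀ (j' : Fin n) (i : Fin n),
      sigmaH j' (W i) = HahnSeries.single (m j' : ℤ) (a i j') := by
    intro j' i
    refine hahn_ext' fun g => ?_
    rw [sigmaH_coeff, hWc, HahnSeries.coeff_single]
    rcases g with k | k
    · simp only [Int.ofNat_eq_natCast]
      rw [HahnSeries.ofPowerSeries_apply_coeff, hφc, TrivSqZeroExt.snd_inr, Finset.sum_apply]
      have : ∀ j ∈ Finset.univ.filter (fun j => m j = k),
          (a i j • (Pi.single j (1 : ℂ) : Fin n → ℂ)) j' = if j' = j then a i j else 0 := by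
        intro j _
        rw [Pi.smul_apply, Pi.single_apply, smul_eq_mul]
        split <;> simp
      rw [Finset.sum_congr rfl this, Finset.sum_ite_eq]
      by_cases h : m j' = k
      · subst h
        simp [Finset.mem_filter]
      · have hne : ((k : ℕ) : ℤ) ≠ ((m j' : ℕ) : ℤ) := by omega
        simp [Finset.mem_filter, h, hne]
    · rw [hneg _ _ (Int.negSucc_lt_zero k), map_zero, TrivSqZeroExt.snd_zero]
      have : (Int.negSucc k) ≠ ((m j' : ℕ) : ℤ) := by
        intro hcon; rw [Int.negSucc_eq] at hcon; omega
      simp [this]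
  -- main extraction
  have main : ∀ j : Fin n, ∃ v : Fin n → LaurentSeries ℂ, ∀ j' : Fin n,
      (∑ i, v i * HahnSeries.single (m j' : ℤ) (a i j')) =
        HahnSeries.single (0 : ℤ) (if j' = j then (1 : ℂ) else 0) := by
    intro j
    have hΨsingle : ∀ (g : ℤ) (r : (MvPolynomial (Fin n) ℂ)), Ψ (HahnSeries.single g r) = HahnSeries.single g (φ r) := by
      intro g r
      refine hahn_ext' fun b => ?_
      rw [hΨcoeff, HahnSeries.coeff_single, HahnSeries.coeff_single, apply_ite φ, map_zero]
    have key : ∀ t ∈ Algebra.adjoin ℂ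
        ({HahnSeries.single (-1 : ℤ) (1 : (MvPolynomial (Fin n) ℂ))} ∪
          Set.range fun i => (HahnSeries.ofPowerSeries ℤ (MvPolynomial (Fin n) ℂ)) (z' i)),
        Ψ t ∈ PAsub W hWW := by
      intro t ht
      induction ht using Algebra.adjoin_induction with
      | mem u hu =>
        rcases hu with hu | ⟨i, rfl⟩
        · rw [Set.mem_singleton_iff] at hu
          subst hu
          rw [hΨsingle, map_one]
          exact ⟨HahnSeries.single (-1 : ℤ) 1, 0, by
            simp [iotaB_single, iotaB_zero, TrivSqZeroExt.inl_one]⟩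
        · refine ⟨0, fun i' => if i' = i then 1 else 0, ?_⟩
          have he : ∀ i' : Fin n,
              iotaB n (if i' = i then (1 : LaurentSeries ℂ) else 0) * W i' =
                if i' = i then W i' else 0 := by
            intro i'; split <;> simp [iotaB_one, iotaB_zero]
          rw [iotaB_zero, zero_add, Finset.sum_congr rfl fun i' _ => he i',
            Finset.sum_ite_eq']
          simp [hW]
      | algebraMap c =>
        have : Ψ (algebraMap ℂ (LaurentSeries (MvPolynomial (Fin n) ℂ)) c) = algebraMap ℂ (Bf n) c := by
          refine hahn_ext' fun g => ?_
          rw [hΨcoeff, algMap_hahn_coeff, algMap_hahn_coeff, apply_ite φ, map_zero,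
            AlgHom.commutes]
        rw [this]
        exact Subalgebra.algebraMap_mem _ c
      | add p q _ _ hp hq =>
        have : Ψ (p + q) = Ψ p + Ψ q := by
          refine hahn_ext' fun g => ?_
          rw [hΨcoeff, HahnSeries.coeff_add, HahnSeries.coeff_add, hΨcoeff, hΨcoeff,
            map_add]
        rw [this]; exact add_mem hp hq
      | mul p q _ _ hp hq =>
        have : Ψ (p * q) = Ψ p * Ψ q := HahnSeries.map_mul φ.toRingHom.toNonUnitalRingHom
        rw [this]; exact mul_mem hp hq
    have h0 := key _ (hgen j)
    rw [HahnSeries.ofPowerSeries_C, HahnSeries.C_apply, hΨsingle] at h0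
    obtain ⟨x, v, hxv⟩ := h0
    refine ⟨v, fun j' => ?_⟩
    have e := congrArg (sigmaH j') hxv
    rw [map_add, map_sum, sigmaH_iota, zero_add, sigmaH_single] at e
    simp only [sigmaH_iota_mul, hWsig j'] at e
    rw [← e]
    have hsnd : (φ (MvPolynomial.X j)).snd j' = if j' = j then (1 : ℂ) else 0 := by
      rw [hφ, MvPolynomial.aeval_X, TrivSqZeroExt.snd_inr, Pi.single_apply]
    rw [hsnd]
  choose v hv using main
  -- matrix conclusion over K = LaurentSeries ℂ
  have hGMD : (Matrix.of fun j i => v j i) *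
      ((Matrix.of a).map (algebraMap ℂ (LaurentSeries ℂ)) *
        Matrix.diagonal fun j' : Fin n => (HahnSeries.single (m j' : ℤ) 1 : LaurentSeries ℂ)) =
      1 := by
    ext j j'
    rw [Matrix.mul_apply]
    have hMD : ∀ i, ((Matrix.of a).map (algebraMap ℂ (LaurentSeries ℂ)) *
        Matrix.diagonal fun j'' : Fin n =>
          (HahnSeries.single (m j'' : ℤ) 1 : LaurentSeries ℂ)) i j' =
        HahnSeries.single (m j' : ℤ) (a i j') := by
      intro i
      rw [Matrix.mul_diagonal, Matrix.map_apply, Matrix.of_apply, algMap_laurent,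
        HahnSeries.single_mul_single, zero_add, mul_one]
    simp only [hMD, Matrix.of_apply]
    rw [hv j j', Matrix.one_apply]
    by_cases h : j = j'
    · subst h
      simp [← HahnSeries.C_apply, HahnSeries.C_one]
    · rw [if_neg h, if_neg (Ne.symm h), HahnSeries.single_eq_zero]
  have hu := Matrix.isUnit_det_of_left_inverse hGMD
  rw [Matrix.det_mul] at hu
  have hM := isUnit_of_mul_isUnit_left hu
  rw [← RingHom.mapMatrix_apply, ← RingHom.map_det] at hM
  by_contra hdet
  rw [isUnit_iff_ne_zero, not_not] at hdet
  rw [hdet, map_zero] at hM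
  exact zero_ne_one (isUnit_zero_iff.mp hM)
end

section
/- Define a ℂ(q)-algebra with basis {a_ψ : ψ ∈ C₀} for a saturated submonoid C₀ ⊆ ℕ^N and multiplication a_ψ a_φ = 0 if ℰ(ψ+φ) ≺ ℰ(ψ)+ℰ(φ) and a_ψ a_φ = q^{c(ψ,φ)} a_{ψ+φ} if ℰ(ψ+φ) = ℰ(ψ)+ℰ(φ), where c is a ℤ-bilinear form on ℕ^N. Then this multiplication is associative. -/
/-- The multiplication with basis `{a_ψ : ψ ∈ C₀}`:
`a_ψ a_φ = 0` if `ℰ(ψ+φ) ≺ ℰ(ψ)+ℰ(φ)` and `a_ψ a_φ = q^{c(ψ,φ)} a_{ψ+φ}` if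
`ℰ(ψ+φ) = ℰ(ψ)+ℰ(φ)`, extended bilinearly to `⊕_{ψ ∈ C₀} ℂ(q)·a_ψ`. -/
noncomputable def harmMul (N : ℕ) (P : Type*) [AddCommGroup P] [DecidableEq P]
    (C : AddSubmonoid (Fin N → ℕ)) (E : (Fin N → ℕ) → P)
    (c : (Fin N → ℕ) → (Fin N → ℕ) → ℤ)
    (f g : C →₀ RatFunc ℂ) : C →₀ RatFunc ℂ :=
  f.sum fun ψ x =>
    g.sum fun φ y =>
      if E ((ψ : Fin N → ℕ) + (φ : Fin N → ℕ)) = E ψ + E φ then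
        Finsupp.single (ψ + φ) (x * y * (RatFunc.X : RatFunc ℂ) ^ (c ψ φ))
      else 0

section aux

variable (N : ℕ) (P : Type*) [AddCommGroup P] [DecidableEq P]
    (C : AddSubmonoid (Fin N → ℕ)) (E : (Fin N → ℕ) → P)
    (c : (Fin N → ℕ) → (Fin N → ℕ) → ℤ)

lemma harmMul_zero_left (g : C →₀ RatFunc ℂ) : harmMul N P C E c 0 g = 0 := by
  simp [harmMul]

lemma harmMul_zero_right (f : C →₀ RatFunc ℂ) : harmMul N P C E c f 0 = 0 := by
  simp [harmMul]

lemma harmMul_add_left (f f' g : C →₀ RatFunc ℂ) :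
    harmMul N P C E c (f + f') g = harmMul N P C E c f g + harmMul N P C E c f' g := by
  unfold harmMul
  apply Finsupp.sum_add_index'
  · intro ψ
    apply Finset.sum_eq_zero
    intro φ _
    dsimp only
    split <;> simp
  · intro ψ x x'
    rw [← Finsupp.sum_add]
    apply Finsupp.sum_congr
    intro φ _
    split <;> simp [add_mul, Finsupp.single_add]

lemma harmMul_add_right (f g g' : C →₀ RatFunc ℂ) :
    harmMul N P C E c f (g + g') = harmMul N P C E c f g + harmMul N P C E c f g' := by
  unfold harmMul
  rw [← Finsupp.sum_add]
  apply Finsupp.sum_congr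
  intro ψ _
  apply Finsupp.sum_add_index'
  · intro φ
    split <;> simp
  · intro φ y y'
    split <;> simp [mul_add, add_mul, Finsupp.single_add]

lemma harmMul_single_single (ψ φ : C) (x y : RatFunc ℂ) :
    harmMul N P C E c (Finsupp.single ψ x) (Finsupp.single φ y) =
      if E ((ψ : Fin N → ℕ) + (φ : Fin N → ℕ)) = E ψ + E φ then
        Finsupp.single (ψ + φ) (x * y * (RatFunc.X : RatFunc ℂ) ^ (c ψ φ))
      else 0 := by
  unfold harmMul
  rw [Finsupp.sum_single_index, Finsupp.sum_single_index]
  · split <;> simp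
  · apply Finset.sum_eq_zero
    intro φ' _
    dsimp only
    split <;> simp

end aux

/-- Theorem (3.5): the above multiplication is associative, when `C₀` is a saturated
submonoid of `ℕ^N`, `ℰ` is subadditive with values in a partially ordered group
(ordered by a pointed submonoid `P⁺`), and `c` is `ℤ`-bilinear. -/
theorem stmt_18 (N : ℕ) (P : Type*) [AddCommGroup P] [DecidableEq P]
    (Pplus : AddSubmonoid P)
    (hpointed : ∀ x ∈ Pplus, -x ∈ Pplus → x = 0)
    (C : AddSubmonoid (Fin N → ℕ))
    (hsat : ∀ k : ℕ, 0 < k → ∀ ψ, k • ψ ∈ C → ψ ∈ C)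
    (E : (Fin N → ℕ) → P)
    (hEsub : ∀ a b, E a + E b - E (a + b) ∈ Pplus)
    (c : (Fin N → ℕ) → (Fin N → ℕ) → ℤ)
    (hcl : ∀ a b d, c (a + b) d = c a d + c b d)
    (hcr : ∀ a b d, c a (b + d) = c a b + c a d) :
    ∀ f g h : C →₀ RatFunc ℂ,
      harmMul N P C E c (harmMul N P C E c f g) h =
        harmMul N P C E c f (harmMul N P C E c g h) := by
  -- pointedness: if u, v ∈ Pplus and u + v = 0 then u = 0
  have hsplit : ∀ u v : P, u ∈ Pplus → v ∈ Pplus → u + v = 0 → u = 0 ∧ v = 0 := by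
    intro u v hu hv huv
    have h1 : -u = v := neg_eq_of_add_eq_zero_right huv
    have h2 : u = 0 := hpointed u hu (h1 ▸ hv)
    refine ⟨h2, ?_⟩
    rw [h2, zero_add] at huv
    exact huv
  -- key combinatorial lemma
  have key : ∀ a b d : Fin N → ℕ,
      (E (a + b) = E a + E b ∧ E (a + b + d) = E (a + b) + E d) ↔
      (E (b + d) = E b + E d ∧ E (a + (b + d)) = E a + E (b + d)) := by
    intro a b d
    constructor
    · rintro ⟨h1, h2⟩
      have htot : E (a + (b + d)) = E a + E b + E d := by
        rw [← add_assoc, h2, h1]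
      have hu := hEsub b d
      have hv := hEsub a (b + d)
      have hsum : (E b + E d - E (b + d)) + (E a + E (b + d) - E (a + (b + d))) = 0 := by
        rw [htot]; abel
      obtain ⟨e1, e2⟩ := hsplit _ _ hu hv hsum
      have hbd : E (b + d) = E b + E d := (sub_eq_zero.mp e1).symm
      exact ⟨hbd, by rw [htot, hbd]; abel⟩
    · rintro ⟨h1, h2⟩
      have htot : E (a + b + d) = E a + E b + E d := by
        rw [add_assoc, h2, h1]; abel
      have hu := hEsub a b
      have hv := hEsub (a + b) d
      have hsum : (E a + E b - E (a + b)) + (E (a + b) + E d - E (a + b + d)) = 0 := by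
        rw [htot]; abel
      obtain ⟨e1, e2⟩ := hsplit _ _ hu hv hsum
      have hab : E (a + b) = E a + E b := (sub_eq_zero.mp e1).symm
      exact ⟨hab, by rw [htot, hab]⟩
  intro f g h
  induction f using Finsupp.induction_linear with
  | zero => simp [harmMul_zero_left]
  | add f f' hf hf' => simp [harmMul_add_left, harmMul_add_right, hf, hf']
  | single ψ x =>
    induction g using Finsupp.induction_linear with
    | zero => simp [harmMul_zero_left, harmMul_zero_right]
    | add g g' hg hg' =>
        simp [harmMul_add_left, harmMul_add_right, hg, hg']
    | single φ y =>
      induction h using Finsupp.induction_linear with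
      | zero => simp [harmMul_zero_right]
      | add h h' hh hh' =>
          simp [harmMul_add_left, harmMul_add_right, hh, hh']
      | single τ z =>
        rw [harmMul_single_single, harmMul_single_single]
        by_cases hA : E ((ψ : Fin N → ℕ) + (φ : Fin N → ℕ)) = E ψ + E φ
        · rw [if_pos hA]
          by_cases hB : E (((ψ : Fin N → ℕ) + φ) + τ) = E ((ψ : Fin N → ℕ) + φ) + E τ
          · obtain ⟨hA', hB'⟩ := (key ψ φ τ).mp ⟨hA, hB⟩
            rw [harmMul_single_single, if_pos hA', harmMul_single_single]
            have hcoe : ((ψ + φ : C) : Fin N → ℕ) = (ψ : Fin N → ℕ) + φ := rfl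
            have hcoe2 : ((φ + τ : C) : Fin N → ℕ) = (φ : Fin N → ℕ) + τ := rfl
            rw [hcoe, hcoe2, if_pos hB, if_pos hB', add_assoc]
            congr 1
            rw [hcl, hcr, zpow_add₀ RatFunc.X_ne_zero, zpow_add₀ RatFunc.X_ne_zero]
            ring
          · have hA'B' : ¬ (E ((φ : Fin N → ℕ) + τ) = E φ + E τ ∧
                E ((ψ : Fin N → ℕ) + ((φ : Fin N → ℕ) + τ)) = E ψ + E ((φ : Fin N → ℕ) + τ)) := by
              intro hc'
              exact hB ((key ψ φ τ).mpr hc').2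
            rw [harmMul_single_single]
            have hcoe : ((ψ + φ : C) : Fin N → ℕ) = (ψ : Fin N → ℕ) + φ := rfl
            rw [hcoe, if_neg hB]
            by_cases hA' : E ((φ : Fin N → ℕ) + τ) = E φ + E τ
            · rw [if_pos hA', harmMul_single_single]
              have hcoe2 : ((φ + τ : C) : Fin N → ℕ) = (φ : Fin N → ℕ) + τ := rfl
              rw [hcoe2, if_neg (fun hB' => hA'B' ⟨hA', hB'⟩)]
            · rw [if_neg hA', harmMul_zero_right]
        · rw [if_neg hA, harmMul_zero_left]
          by_cases hA' : E ((φ : Fin N → ℕ) + τ) = E φ + E τ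
          · rw [if_pos hA', harmMul_single_single]
            have hcoe2 : ((φ + τ : C) : Fin N → ℕ) = (φ : Fin N → ℕ) + τ := rfl
            rw [hcoe2]
            have : ¬ E ((ψ : Fin N → ℕ) + ((φ : Fin N → ℕ) + τ)) = E ψ + E ((φ : Fin N → ℕ) + τ) := by
              intro hB'
              exact hA ((key ψ φ τ).mpr ⟨hA', hB'⟩).1
            rw [if_neg this]
          · rw [if_neg hA', harmMul_zero_right]
end
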